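/- Let m ≥ 1 and consider m machines with speeds s_i satisfying 0 < s_i ≤ 1 for all i and max_i s_i = 1, and n jobs with sizes p_j ≥ 0. Let F = { i : s_i ≥ 1/√m } be the set of fast machines. Suppose there exists an assignment of all jobs to the m machines whose makespan (maximum over machines i of (Σ_{jobs j assigned to i} p_j)/s_i) is at most T. Then every greedy (list scheduling) assignment of the jobs, in any order, to machines in F only — i.e., an assignment σ : {1,…,n} → F such that for every job j and every i ∈ F, the load of σ(j) just before j is at most the load of i just before j — has makespan at most 3 · √m · T. -/

import Mathlib

open Finset

/-- List scheduling restricted to the fast machines `F = {i : s i ≥ 1/√m}` on related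
machines: if some assignment of all jobs to the `m` machines has makespan at most `T`,
then every greedy assignment of the jobs to machines in `F` has makespan at most
`3 · √m · T`. -/
theorem stmt9 (m n : ℕ) (hm : 0 < m)
    (s : Fin m → ℝ) (hpos : ∀ i, 0 < s i) (hle : ∀ i, s i ≤ 1) (hmax : ∃ i, s i = 1)
    (p : Fin n → ℝ) (hp : ∀ j, 0 ≤ p j)
    (T : ℝ)
    (ρ : Fin n → Fin m)
    (hρ : ∀ i, (∑ j ∈ Finset.univ.filter (fun j => ρ j = i), p j) / s i ≤ T)
    (σ : Fin n → Fin m)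
    (hσF : ∀ j, 1 / Real.sqrt m ≤ s (σ j))
    (hgreedy : ∀ (j : Fin n) (i : Fin m), 1 / Real.sqrt m ≤ s i →
      (∑ j' ∈ Finset.univ.filter (fun j' => j' < j ∧ σ j' = σ j), p j') / s (σ j) ≤
        (∑ j' ∈ Finset.univ.filter (fun j' => j' < j ∧ σ j' = i), p j') / s i) :
    (⨆ i, (∑ j ∈ Finset.univ.filter (fun j => σ j = i), p j) / s i) ≤
      3 * Real.sqrt m * T := by
  have hm1 : (1:ℝ) ≤ m := by exact_mod_cast hm
  set R := Real.sqrt m with hR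
  have hR1 : (1:ℝ) ≤ R := by
    rw [hR, show (1:ℝ) = Real.sqrt 1 by simp]
    exact Real.sqrt_le_sqrt hm1
  have hRpos : (0:ℝ) < R := lt_of_lt_of_le one_pos hR1
  have hRsq : R * R = m := Real.mul_self_sqrt (by linarith)
  obtain ⟨i1, hi1⟩ := hmax
  have hT : 0 ≤ T := by
    have h1 := hρ i1
    have h2 : 0 ≤ (∑ j ∈ Finset.univ.filter (fun j => ρ j = i1), p j) / s i1 :=
      div_nonneg (Finset.sum_nonneg fun j _ => hp j) (hpos i1).le
    linarith
  -- total work bound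
  have htot : ∑ j, p j ≤ T * ∑ i, s i := by
    rw [← Finset.sum_fiberwise_of_maps_to (fun j _ => Finset.mem_univ (ρ j)) p,
      Finset.mul_sum]
    refine Finset.sum_le_sum fun i _ => ?_
    have := (div_le_iff₀ (hpos i)).mp (hρ i)
    linarith
  set F : Finset (Fin m) := Finset.univ.filter (fun i => 1 / R ≤ s i) with hF
  have hi1F : i1 ∈ F := by
    rw [hF, Finset.mem_filter]
    refine ⟨Finset.mem_univ _, ?_⟩
    rw [hi1]
    rw [div_le_one hRpos]; exact hR1
  set SF : ℝ := ∑ i ∈ F, s i with hSF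
  have hSF1 : 1 ≤ SF := by
    rw [hSF, ← hi1]
    exact Finset.single_le_sum (fun i _ => (hpos i).le) hi1F
  have hslow : ∑ i ∈ Finset.univ.filter (fun i => ¬ (1 / R ≤ s i)), s i ≤ R := by
    calc ∑ i ∈ Finset.univ.filter (fun i => ¬ (1 / R ≤ s i)), s i
        ≤ ∑ _i ∈ Finset.univ.filter (fun i => ¬ (1 / R ≤ s i)), (1 / R) := by
          refine Finset.sum_le_sum fun i hi => ?_
          rw [Finset.mem_filter] at hi
          exact (not_le.mp hi.2).le
      _ = (Finset.univ.filter (fun i => ¬ (1 / R ≤ s i))).card * (1 / R) := by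
          rw [Finset.sum_const, nsmul_eq_mul]
      _ ≤ m * (1 / R) := by
          apply mul_le_mul_of_nonneg_right _ (by positivity)
          have hc : (Finset.univ.filter (fun i => ¬ (1 / R ≤ s i))).card ≤ m :=
            le_trans (Finset.card_filter_le _ _) (by simp)
          exact_mod_cast hc
      _ = R := by field_simp; linarith [hRsq]
  have hS : ∑ i, s i ≤ SF + R := by
    rw [← Finset.sum_filter_add_sum_filter_not Finset.univ (fun i => 1 / R ≤ s i) s]
    exact add_le_add_right hslow _
  haveI : Nonempty (Fin m) := ⟨⟨0, hm⟩⟩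
  refine ciSup_le fun i => ?_
  by_cases hAne : (Finset.univ.filter (fun j => σ j = i)).Nonempty
  · set A := Finset.univ.filter (fun j => σ j = i) with hA
    set j := A.max' hAne with hj
    have hjA : j ∈ A := A.max'_mem hAne
    have hσj : σ j = i := (Finset.mem_filter.mp hjA).2
    set B : Finset (Fin n) := Finset.univ.filter (fun j' => j' < j ∧ σ j' = i) with hB
    have hAB : A = insert j B := by
      ext j'
      simp only [hA, hB, Finset.mem_filter, Finset.mem_insert, Finset.mem_univ, true_and]
      constructor
      · intro h
        have hle' : j' ≤ j := A.le_max' j' (Finset.mem_filter.mpr ⟨Finset.mem_univ _, h⟩)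
        rcases lt_or_eq_of_le hle' with h1 | h1
        · exact Or.inr ⟨h1, h⟩
        · exact Or.inl h1
      · rintro (rfl | ⟨_, h⟩)
        · exact hσj
        · exact h
    have hjB : j ∉ B := by
      rw [hB]; simp
    have hsplit : ∑ j' ∈ A, p j' = p j + ∑ j' ∈ B, p j' := by
      rw [hAB, Finset.sum_insert hjB]
    -- load before j bound
    have hσjF : σ j ∈ F := by
      rw [hF, Finset.mem_filter]; exact ⟨Finset.mem_univ _, hσF j⟩
    have hℓ : (∑ j' ∈ B, p j') / s i * SF ≤ 2 * R * T * SF := by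
      have hsum : (∑ j' ∈ B, p j') / s i * SF ≤
          ∑ i' ∈ F, ∑ j' ∈ Finset.univ.filter (fun j' => j' < j ∧ σ j' = i'), p j' := by
        rw [hSF, Finset.mul_sum]
        refine Finset.sum_le_sum fun i' hi' => ?_
        rw [hF, Finset.mem_filter] at hi'
        have hg := hgreedy j i' hi'.2
        rw [hσj] at hg
        rw [← hB] at hg
        calc (∑ j' ∈ B, p j') / s i * s i'
            ≤ (∑ j' ∈ Finset.univ.filter (fun j' => j' < j ∧ σ j' = i'), p j') / s i' * s i' := by
              gcongr
              exact (hpos i').le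
          _ = _ := div_mul_cancel₀ _ (ne_of_gt (hpos i'))
      have hfib : ∑ i' ∈ F, ∑ j' ∈ Finset.univ.filter (fun j' => j' < j ∧ σ j' = i'), p j'
          = ∑ j' ∈ Finset.univ.filter (fun j' => j' < j), p j' := by
        rw [← Finset.sum_fiberwise_of_maps_to (s := Finset.univ.filter (fun j' => j' < j))
          (g := σ) (t := F) (fun x hx => by
            rw [hF, Finset.mem_filter]; exact ⟨Finset.mem_univ _, hσF x⟩) p]
        congr 1
        ext i'
        congr 1
        rw [Finset.filter_filter]
      have hle2 : ∑ j' ∈ Finset.univ.filter (fun j' => j' < j), p j' ≤ ∑ j', p j' :=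
        Finset.sum_le_sum_of_subset_of_nonneg (Finset.filter_subset _ _)
          (fun j' _ _ => hp j')
      have hchain : (∑ j' ∈ B, p j') / s i * SF ≤ T * (SF + R) := by
        calc (∑ j' ∈ B, p j') / s i * SF ≤ _ := hsum
          _ = _ := hfib
          _ ≤ ∑ j', p j' := hle2
          _ ≤ T * ∑ i', s i' := htot
          _ ≤ T * (SF + R) := by gcongr
      have : T * (SF + R) ≤ 2 * R * T * SF := by
        nlinarith [mul_nonneg (mul_nonneg hRpos.le hT) (sub_nonneg.mpr hSF1),
          mul_nonneg (mul_nonneg hT (le_trans zero_le_one hSF1)) (sub_nonneg.mpr hR1)]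
      linarith
    have hℓ' : (∑ j' ∈ B, p j') / s i ≤ 2 * R * T :=
      le_of_mul_le_mul_right hℓ (by linarith)
    -- p j bound
    have hpj : p j ≤ T := by
      have h1 : p j ≤ ∑ j' ∈ Finset.univ.filter (fun j' => ρ j' = ρ j), p j' :=
        Finset.single_le_sum (fun j' _ => hp j')
          (Finset.mem_filter.mpr ⟨Finset.mem_univ _, rfl⟩)
      have h2 := (div_le_iff₀ (hpos (ρ j))).mp (hρ (ρ j))
      have h3 : T * s (ρ j) ≤ T * 1 := by
        apply mul_le_mul_of_nonneg_left (hle _) hT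
      linarith
    have hsi : 1 / R ≤ s i := hσj ▸ hσF j
    have hpji : p j / s i ≤ R * T := by
      calc p j / s i ≤ p j / (1 / R) :=
            div_le_div_of_nonneg_left (hp j) (by positivity) hsi
        _ = p j * R := by field_simp
        _ ≤ T * R := mul_le_mul_of_nonneg_right hpj hRpos.le
        _ = R * T := mul_comm _ _
    calc (∑ j' ∈ A, p j') / s i = p j / s i + (∑ j' ∈ B, p j') / s i := by
          rw [hsplit, add_div]
      _ ≤ R * T + 2 * R * T := add_le_add hpji hℓ'
      _ = 3 * R * T := by ring
  · rw [Finset.not_nonempty_iff_eq_empty.mp hAne]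
    simp only [Finset.sum_empty, zero_div]
    positivity
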